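/- Let m ≥ 1 and n ≥ 0 be integers and let R > 1 be real. Then (1/(2πi)) · ∮_{|ζ|=R} ζ^{2m} / ((ζ−1)^{1/2}(ζ+1)^{1/2}·(ζ−1)^{n+1}) dζ = ∑_{j=0}^{⌊(2m−n−1)/2⌋} ((1/2)_j / j!) · C(2m−1−2j, 2m−n−1−2j) if n ≤ 2m−1, and the integral equals 0 if n ≥ 2m. Here the integral is over the positively oriented circle of radius R centered at 0, each square root is the principal complex square root, (1/2)_j is the Pochhammer symbol, and C(·,·) is the binomial coefficient. -/

import Mathlib

open Finset Complex intervalIntegral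

/-- The Pochhammer symbol (rising factorial) `(x)_j = x (x+1) ⋯ (x+j-1)`, with `(x)_0 = 1`. -/
noncomputable def pochC (x : ℂ) (j : ℕ) : ℂ := ∏ i ∈ Finset.range j, (x + (i : ℂ))

noncomputable def aseq : ℕ → ℝ := fun j => ∏ i ∈ Finset.range j, ((2*i+1 : ℝ)/(2*i+2))

lemma aseq_zero : aseq 0 = 1 := by simp [aseq]

lemma aseq_succ (j : ℕ) : aseq (j+1) = aseq j * ((2*j+1)/(2*j+2)) := by
  unfold aseq; rw [Finset.prod_range_succ]

lemma aseq_pos (j : ℕ) : 0 < aseq j := by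
  apply Finset.prod_pos; intro i _; positivity

lemma aseq_le_one (j : ℕ) : aseq j ≤ 1 := by
  apply Finset.prod_le_one <;> intro i _
  · positivity
  · rw [div_le_one (by positivity)]; linarith

lemma aseq_rec (j : ℕ) : (2*j+2 : ℝ) * aseq (j+1) = (2*j+1) * aseq j := by
  rw [aseq_succ]; field_simp

lemma key1 (M : ℕ) :
    ∑ i ∈ range (M+1), (2*(i:ℝ)+1) * (aseq i * aseq (M-i))
      = ((M:ℝ)+1) * ∑ i ∈ range (M+1), aseq i * aseq (M-i) := by
  have hrefl := Finset.sum_range_reflect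
    (fun i => (2*(i:ℝ)+1) * (aseq i * aseq (M-i))) (M+1)
  have h2 : (2:ℝ) * ∑ i ∈ range (M+1), (2*(i:ℝ)+1) * (aseq i * aseq (M-i))
      = ∑ i ∈ range (M+1), (2*(M:ℝ)+2) * (aseq i * aseq (M-i)) := by
    rw [two_mul]
    nth_rewrite 1 [← hrefl]
    rw [← Finset.sum_add_distrib]
    apply Finset.sum_congr rfl
    intro i hi
    simp only [Finset.mem_range] at hi
    have hi' : i ≤ M := by omega
    have e1 : M + 1 - 1 - i = M - i := by omega
    have e2 : M - (M - i) = i := by omega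
    rw [e1, e2]
    have : ((M - i : ℕ) : ℝ) = (M : ℝ) - i := by
      rw [Nat.cast_sub hi']
    rw [this, mul_comm (aseq (M-i)) (aseq i)]
    ring
  rw [← Finset.mul_sum] at h2
  linarith [h2]

lemma key2 (M : ℕ) :
    ∑ i ∈ range (M+2), (2*(i:ℝ)) * (aseq i * aseq (M+1-i))
      = ∑ i ∈ range (M+1), (2*(i:ℝ)+1) * (aseq i * aseq (M-i)) := by
  rw [Finset.sum_range_succ']
  simp only [Nat.cast_zero, mul_zero, zero_mul, add_zero]
  apply Finset.sum_congr rfl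
  intro i hi
  have e1 : M + 1 - (i+1) = M - i := by omega
  rw [e1]
  push_cast
  have := aseq_rec i
  linear_combination aseq (M - i) * this

lemma conv_one : ∀ N : ℕ, ∑ i ∈ range (N+1), aseq i * aseq (N - i) = 1 := by
  intro N
  induction N with
  | zero => simp [aseq_zero]
  | succ M ih =>
    have k1 := key1 (M+1)
    have k2 := key2 M
    have k1' := key1 M
    rw [ih] at k1'
    have split : ∑ i ∈ range (M+2), (2*(i:ℝ)+1) * (aseq i * aseq (M+1-i))
        = (∑ i ∈ range (M+2), (2*(i:ℝ)) * (aseq i * aseq (M+1-i)))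
          + ∑ i ∈ range (M+2), aseq i * aseq (M+1-i) := by
      rw [← Finset.sum_add_distrib]
      apply Finset.sum_congr rfl; intro i _; ring
    rw [split, k2, k1'] at k1
    -- k1 : (M+1) + T = (M+2) * T  where T = ∑ ...
    have hM : ((M:ℝ)+1+1) ≠ 0 := by positivity
    push_cast at k1 ⊢
    nlinarith [k1]

/-- helper: two continuous square roots agreeing at a point agree on a preconnected set -/
lemma eq_on_of_sq_eq {s : Set ℂ} (hs : IsPreconnected s) {f g : ℂ → ℂ}
    (hf : ContinuousOn f s) (hg : ContinuousOn g s)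
    (hsq : ∀ x ∈ s, f x ^ 2 = g x ^ 2) (hg0 : ∀ x ∈ s, g x ≠ 0)
    {x₀ : ℂ} (hx₀ : x₀ ∈ s) (h0 : f x₀ = g x₀) : ∀ x ∈ s, f x = g x := by
  haveI : PreconnectedSpace s := Subtype.preconnectedSpace hs
  set E : Set s := {x : s | f x = g x} with hE
  have hdich : ∀ x : s, f x = g x ∨ f x = - g x := by
    intro x
    have h := hsq x x.2
    have : (f x - g x) * (f x + g x) = 0 := by ring_nf; linear_combination h
    rcases mul_eq_zero.1 this with h' | h'
    · left; linear_combination h'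
    · right; linear_combination h'
  have hopen : IsOpen E := by
    have : E = (fun x : s => f x + g x) ⁻¹' {0}ᶜ := by
      ext x
      simp only [hE, Set.mem_setOf_eq, Set.mem_preimage, Set.mem_compl_iff,
        Set.mem_singleton_iff]
      constructor
      · intro h hc
        apply hg0 x x.2
        have : (2:ℂ) * g x = 0 := by rw [← hc, h]; ring
        simpa using this
      · intro h
        rcases hdich x with h' | h'
        · exact h'
        · exact absurd (by rw [h']; ring) h
    rw [this]
    exact (isOpen_compl_singleton).preimage (((hf.restrict).add (hg.restrict)))
  have hclosed : IsClosed E := by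
    have : E = (fun x : s => f x - g x) ⁻¹' {0} := by
      ext x; simp [hE, sub_eq_zero]
    rw [this]
    exact (isClosed_singleton).preimage ((hf.restrict).sub (hg.restrict))
  have huniv : E = Set.univ :=
    IsClopen.eq_univ ⟨hclosed, hopen⟩ ⟨⟨x₀, hx₀⟩, h0⟩
  intro x hx
  have : (⟨x, hx⟩ : s) ∈ E := huniv ▸ Set.mem_univ _
  exact this

lemma summable_norm_aseq {x : ℂ} (hx : ‖x‖ < 1) :
    Summable fun j => ‖(aseq j : ℂ) * x ^ j‖ := by
  apply Summable.of_nonneg_of_le (fun j => norm_nonneg _)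
    (fun j => ?_) (summable_geometric_of_lt_one (norm_nonneg x) hx)
  rw [norm_mul, norm_pow]
  calc ‖((aseq j : ℝ) : ℂ)‖ * ‖x‖ ^ j ≤ 1 * ‖x‖ ^ j := by
        apply mul_le_mul_of_nonneg_right _ (by positivity)
        rw [Complex.norm_real, Real.norm_eq_abs, abs_of_pos (aseq_pos j)]
        exact aseq_le_one j
    _ = ‖x‖ ^ j := one_mul _

noncomputable def Sfun : ℂ → ℂ := fun x => ∑' j, (aseq j : ℂ) * x ^ j

lemma cpow_half_sq {z : ℂ} (hz : z ≠ 0) : (z ^ (1/2 : ℂ)) ^ 2 = z := by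
  rw [sq, ← Complex.cpow_add _ _ hz]
  norm_num

lemma cpow_half_ne_zero {z : ℂ} (hz : z ≠ 0) : z ^ (1/2 : ℂ) ≠ 0 := by
  simp [Complex.cpow_eq_zero_iff, hz]

lemma Sfun_sq {x : ℂ} (hx : ‖x‖ < 1) : Sfun x * Sfun x = (1 - x)⁻¹ := by
  rw [Sfun, tsum_mul_tsum_eq_tsum_sum_range_of_summable_norm
    (summable_norm_aseq hx) (summable_norm_aseq hx)]
  have : ∀ N : ℕ, ∑ k ∈ range (N+1), ((aseq k : ℂ) * x ^ k) * ((aseq (N-k) : ℂ) * x ^ (N-k))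
      = x ^ N := by
    intro N
    have : ∀ k ∈ range (N+1), ((aseq k : ℂ) * x ^ k) * ((aseq (N-k) : ℂ) * x ^ (N-k))
        = ((aseq k * aseq (N-k) : ℝ) : ℂ) * x ^ N := by
      intro k hk
      simp only [Finset.mem_range] at hk
      have hxN : x ^ k * x ^ (N-k) = x ^ N := by rw [← pow_add]; congr 1; omega
      push_cast
      calc (aseq k : ℂ) * x ^ k * ((aseq (N-k) : ℂ) * x ^ (N-k))
          = (aseq k : ℂ) * (aseq (N-k) : ℂ) * (x ^ k * x ^ (N-k)) := by ring
        _ = (aseq k : ℂ) * (aseq (N-k) : ℂ) * x ^ N := by rw [hxN]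
    rw [Finset.sum_congr rfl this, ← Finset.sum_mul, ← Complex.ofReal_sum, conv_one N]
    simp
  calc ∑' N, ∑ k ∈ range (N+1), ((aseq k : ℂ) * x ^ k) * ((aseq (N-k) : ℂ) * x ^ (N-k))
      = ∑' N : ℕ, x ^ N := by rw [tsum_congr this]
    _ = (1 - x)⁻¹ := tsum_geometric_of_norm_lt_one hx

lemma one_sub_mem_slitPlane {x : ℂ} (hx : ‖x‖ < 1) : 1 - x ∈ Complex.slitPlane := by
  have := Complex.mem_slitPlane_of_norm_lt_one (z := -x) (by simpa using hx)
  simpa [sub_eq_add_neg] using this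

lemma one_sub_ne_zero {x : ℂ} (hx : ‖x‖ < 1) : 1 - x ≠ 0 := by
  intro h
  have : x = 1 := by linear_combination -h
  rw [this] at hx; norm_num at hx

lemma hasSum_aseq {x : ℂ} (hx : ‖x‖ < 1) :
    HasSum (fun j => (aseq j : ℂ) * x ^ j) (((1 - x) ^ (1/2 : ℂ))⁻¹) := by
  set r : ℝ := (1 + ‖x‖)/2 with hr
  have hr1 : r < 1 := by rw [hr]; linarith
  have hr0 : 0 ≤ r := by rw [hr]; positivity
  have hxr : x ∈ Metric.closedBall (0:ℂ) r := by
    simp only [Metric.mem_closedBall, dist_zero_right]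
    rw [hr]; linarith
  have hmem : ∀ y ∈ Metric.closedBall (0:ℂ) r, ‖y‖ < 1 := by
    intro y hy
    simp only [Metric.mem_closedBall, dist_zero_right] at hy
    linarith
  have hS : ContinuousOn Sfun (Metric.closedBall (0:ℂ) r) := by
    apply continuousOn_tsum (u := fun j => r ^ j)
      (fun j => (Continuous.continuousOn (by continuity)))
      (summable_geometric_of_lt_one hr0 hr1)
    intro j y hy
    simp only [Metric.mem_closedBall, dist_zero_right] at hy
    rw [norm_mul, norm_pow, Complex.norm_real, Real.norm_eq_abs,
      abs_of_pos (aseq_pos j)]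
    calc aseq j * ‖y‖ ^ j ≤ 1 * r ^ j := by
          apply mul_le_mul (aseq_le_one j) (pow_le_pow_left₀ (norm_nonneg y) hy j)
            (by positivity) (by norm_num)
      _ = r ^ j := one_mul _
  have hσ : ContinuousOn (fun y : ℂ => ((1 - y) ^ (1/2 : ℂ))⁻¹)
      (Metric.closedBall (0:ℂ) r) := by
    apply ContinuousOn.inv₀
    · intro y hy
      exact (continuousAt_cpow_const
        (one_sub_mem_slitPlane (hmem y hy))).comp
        ((continuous_const.sub continuous_id).continuousAt) |>.continuousWithinAt
    · intro y hy
      exact cpow_half_ne_zero (one_sub_ne_zero (hmem y hy))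
  have heq := eq_on_of_sq_eq ((convex_closedBall (0:ℂ) r).isPreconnected)
    hS hσ ?_ ?_ (Metric.mem_closedBall_self hr0) ?_
  · have hsummable : Summable fun j => (aseq j : ℂ) * x ^ j :=
      (summable_norm_aseq hx).of_norm
    have := hsummable.hasSum
    rwa [show ∑' j, (aseq j : ℂ) * x ^ j = ((1 - x) ^ (1/2 : ℂ))⁻¹ from heq x hxr] at this
  · intro y hy
    rw [sq, sq, Sfun_sq (hmem y hy), ← mul_inv, ← sq, cpow_half_sq (one_sub_ne_zero (hmem y hy))]
  · intro y hy
    exact inv_ne_zero (cpow_half_ne_zero (one_sub_ne_zero (hmem y hy)))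
  · -- value at 0
    have h1 : Sfun 0 = 1 := by
      rw [Sfun, tsum_eq_single 0 (fun j hj => by simp [zero_pow hj])]
      simp [aseq]
    rw [h1]
    norm_num

def Uset : Set ℂ := {z : ℂ | 1 < ‖z‖ ∧ z ∈ Complex.slitPlane}

lemma Uset_eq_image : Uset = Complex.exp ''
    ({w : ℂ | 0 < w.re} ∩ {w | w.im < Real.pi} ∩ {w | -Real.pi < w.im}) := by
  ext z
  simp only [Uset, Set.mem_setOf_eq, Set.mem_image, Set.mem_inter_iff]
  constructor
  · rintro ⟨hz1, hz2⟩
    have hz0 : z ≠ 0 := by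
      intro h; rw [h] at hz1; norm_num at hz1
    refine ⟨Complex.log z, ⟨⟨?_, ?_⟩, ?_⟩, Complex.exp_log hz0⟩
    · simp only [Set.mem_setOf_eq, Complex.log_re]
      exact Real.log_pos hz1
    · simp only [Set.mem_setOf_eq, Complex.log_im]
      exact lt_of_le_of_ne (Complex.arg_le_pi z) (Complex.mem_slitPlane_iff_arg.1 hz2).1
    · simp only [Set.mem_setOf_eq, Complex.log_im]
      exact Complex.neg_pi_lt_arg z
  · rintro ⟨w, ⟨⟨hw1, hw2⟩, hw3⟩, rfl⟩
    constructor
    · rw [Complex.norm_exp]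
      calc (1:ℝ) = Real.exp 0 := Real.exp_zero.symm
        _ < Real.exp w.re := Real.exp_lt_exp.mpr hw1
    · rw [Complex.mem_slitPlane_iff]
      by_cases hsin : Real.sin w.im = 0
      · have him : w.im = 0 := (Real.sin_eq_zero_iff_of_lt_of_lt hw3 hw2).1 hsin
        left
        rw [Complex.exp_re, him]
        simp [Real.exp_pos]
      · right
        rw [Complex.exp_im]
        exact mul_ne_zero (Real.exp_ne_zero _) hsin

lemma Uset_preconnected : IsPreconnected Uset := by
  rw [Uset_eq_image]
  apply IsPreconnected.image _ _ (Complex.continuous_exp.continuousOn)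
  apply Convex.isPreconnected
  exact ((convex_halfSpace_re_gt 0).inter (convex_halfSpace_im_lt Real.pi)).inter
    (convex_halfSpace_im_gt (-Real.pi))

lemma re_big_of_im_zero {z : ℂ} (hz : z ∈ Uset) (him : z.im = 0) : 1 < z.re := by
  obtain ⟨hz1, hz2⟩ := hz
  have hzre : z = (z.re : ℂ) := by
    apply Complex.ext <;> simp [him]
  rw [hzre, Complex.norm_real, Real.norm_eq_abs] at hz1
  rw [Complex.mem_slitPlane_iff] at hz2
  rcases hz2 with h | h
  · rwa [abs_of_pos h] at hz1
  · exact absurd him h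

example : True := trivial

lemma norm_one_lt_facts {z : ℂ} (hz : 1 < ‖z‖) :
    z ≠ 0 ∧ z - 1 ≠ 0 ∧ z + 1 ≠ 0 := by
  refine ⟨?_, ?_, ?_⟩ <;> intro h
  · rw [h] at hz; norm_num at hz
  · have : z = 1 := by linear_combination h
    rw [this] at hz; norm_num at hz
  · have : z = -1 := by linear_combination h
    rw [this] at hz; norm_num at hz

lemma one_sub_inv_sq_mem {z : ℂ} (hz : 1 < ‖z‖) :
    1 - (z⁻¹)^2 ∈ Complex.slitPlane := by
  have h : ‖-(z⁻¹)^2‖ < 1 := by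
    rw [norm_neg, norm_pow, norm_inv]
    have h1 : 1 < ‖z‖ := hz
    have : ‖z‖⁻¹ < 1 := by
      rw [inv_lt_one_iff₀]; right; exact h1
    calc ‖z‖⁻¹ ^ 2 ≤ ‖z‖⁻¹ * 1 := by
          rw [sq]
          apply mul_le_mul_of_nonneg_left this.le (by positivity)
      _ < 1 := by rwa [mul_one]
  have := Complex.mem_slitPlane_of_norm_lt_one h
  rwa [← sub_eq_add_neg] at this

lemma one_sub_inv_sq_ne {z : ℂ} (hz : 1 < ‖z‖) : 1 - (z⁻¹)^2 ≠ 0 := by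
  exact Complex.slitPlane_ne_zero (one_sub_inv_sq_mem hz)

lemma zm1_mem {z : ℂ} (hz : z ∈ Uset) : z - 1 ∈ Complex.slitPlane := by
  rw [Complex.mem_slitPlane_iff]
  by_cases him : z.im = 0
  · left
    have := re_big_of_im_zero hz him
    simp only [Complex.sub_re, Complex.one_re]
    linarith
  · right
    simpa using him

lemma zp1_mem {z : ℂ} (hz : z ∈ Uset) : z + 1 ∈ Complex.slitPlane := by
  rw [Complex.mem_slitPlane_iff]
  by_cases him : z.im = 0
  · left
    have := re_big_of_im_zero hz him
    simp only [Complex.add_re, Complex.one_re]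
    linarith
  · right
    simpa using him

lemma branch_eq_on_Uset : ∀ z ∈ Uset,
    (z-1)^(1/2:ℂ) * (z+1)^(1/2:ℂ) = z * (1 - (z⁻¹)^2)^(1/2:ℂ) := by
  apply eq_on_of_sq_eq Uset_preconnected
  · intro z hz
    apply ContinuousAt.continuousWithinAt
    have h1 : ContinuousAt (fun z : ℂ => z - 1) z :=
      (continuous_id.sub continuous_const).continuousAt
    have h2 : ContinuousAt (fun z : ℂ => z + 1) z :=
      (continuous_id.add continuous_const).continuousAt
    exact (h1.cpow continuousAt_const (zm1_mem hz)).mul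
      (h2.cpow continuousAt_const (zp1_mem hz))
  · intro z hz
    obtain ⟨hz0, _, _⟩ := norm_one_lt_facts hz.1
    apply ContinuousAt.continuousWithinAt
    apply continuousAt_id.mul
    have hin : ContinuousAt (fun z : ℂ => 1 - (z⁻¹)^2) z := by
      have : ContinuousAt (fun z : ℂ => (z⁻¹)^2) z := (continuousAt_inv₀ hz0).pow 2
      exact continuousAt_const.sub this
    exact hin.cpow continuousAt_const (one_sub_inv_sq_mem hz.1)
  · intro z hz
    obtain ⟨hz0, hz1, hz2⟩ := norm_one_lt_facts hz.1
    rw [mul_pow, mul_pow, cpow_half_sq hz1, cpow_half_sq hz2,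
      cpow_half_sq (one_sub_inv_sq_ne hz.1)]
    field_simp
    ring
  · intro z hz
    obtain ⟨hz0, _, _⟩ := norm_one_lt_facts hz.1
    exact mul_ne_zero hz0 (cpow_half_ne_zero (one_sub_inv_sq_ne hz.1))
  · show (2:ℂ) ∈ Uset
    constructor
    · norm_num
    · rw [Complex.mem_slitPlane_iff]; left; norm_num
  · -- value at 2
    have e1 : ((2:ℂ) - 1) = ((1:ℝ):ℂ) := by norm_num
    have e2 : ((2:ℂ) + 1) = ((3:ℝ):ℂ) := by norm_num
    have e3 : (1 - ((2:ℂ)⁻¹)^2) = (((3/4):ℝ):ℂ) := by norm_num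
    rw [e1, e2, e3]
    have c1 : ((1:ℝ):ℂ) ^ (1/2:ℂ) = 1 := by norm_num
    have half : ((1/2 : ℝ):ℂ) = (1/2 : ℂ) := by norm_num
    have c2 : ((3:ℝ):ℂ) ^ (1/2:ℂ) = ((Real.sqrt 3 : ℝ):ℂ) := by
      rw [← half, ← Complex.ofReal_cpow (by norm_num : (0:ℝ) ≤ 3), Real.sqrt_eq_rpow]
    have c3 : (((3/4):ℝ):ℂ) ^ (1/2:ℂ) = ((Real.sqrt (3/4) : ℝ):ℂ) := by
      rw [← half, ← Complex.ofReal_cpow (by norm_num : (0:ℝ) ≤ 3/4), Real.sqrt_eq_rpow]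
    rw [c1, c2, c3, one_mul]
    have : Real.sqrt 3 = 2 * Real.sqrt (3/4) := by
      calc Real.sqrt 3 = Real.sqrt (4 * (3/4)) := by norm_num
        _ = Real.sqrt 4 * Real.sqrt (3/4) := Real.sqrt_mul (by norm_num) _
        _ = 2 * Real.sqrt (3/4) := by
            rw [show (4:ℝ) = 2^2 by norm_num, Real.sqrt_sq (by norm_num : (0:ℝ) ≤ 2)]
    rw [this]
    push_cast
    ring

lemma cpow_half_of_nonneg {t : ℝ} (ht : 0 ≤ t) :
    ((t:ℂ)) ^ (1/2:ℂ) = ((Real.sqrt t : ℝ):ℂ) := by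
  have half : ((1/2 : ℝ):ℂ) = (1/2 : ℂ) := by norm_num
  rw [← half, ← Complex.ofReal_cpow ht, Real.sqrt_eq_rpow]

lemma cpow_half_of_neg {x : ℝ} (hx : x < 0) :
    ((x:ℂ)) ^ (1/2:ℂ) = ((Real.sqrt (-x) : ℝ):ℂ) * Complex.I := by
  rw [Complex.ofReal_cpow_of_nonpos hx.le]
  have e1 : (-(x:ℂ)) = ((-x : ℝ):ℂ) := by push_cast; ring
  rw [e1, cpow_half_of_nonneg (by linarith)]
  congr 1
  have e2 : (Real.pi : ℂ) * Complex.I * (1/2) = ((Real.pi/2 : ℝ):ℂ) * Complex.I := by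
    push_cast; ring
  rw [e2, Complex.exp_mul_I, ← Complex.ofReal_cos, ← Complex.ofReal_sin,
    Real.cos_pi_div_two, Real.sin_pi_div_two]
  simp

lemma branch_neg_real {x : ℝ} (hx : x < -1) :
    ((x:ℂ)-1)^(1/2:ℂ) * ((x:ℂ)+1)^(1/2:ℂ)
      = (x:ℂ) * (1 - ((x:ℂ)⁻¹)^2)^(1/2:ℂ) := by
  have hx0 : x ≠ 0 := by linarith
  have e1 : ((x:ℂ) - 1) = ((x - 1 : ℝ):ℂ) := by push_cast; ring
  have e2 : ((x:ℂ) + 1) = ((x + 1 : ℝ):ℂ) := by push_cast; ring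
  have e3 : (1 - ((x:ℂ)⁻¹)^2) = ((1 - (x⁻¹)^2 : ℝ):ℂ) := by push_cast; ring
  have hpos : (0:ℝ) < 1 - (x⁻¹)^2 := by
    have h1 : x⁻¹^2 < 1 := by
      rw [inv_pow]
      rw [inv_lt_one_iff₀]
      right
      nlinarith
    linarith
  rw [e1, e2, e3, cpow_half_of_neg (by linarith : x - 1 < 0),
    cpow_half_of_neg (by linarith : x + 1 < 0), cpow_half_of_nonneg hpos.le]
  have h1 : Real.sqrt (-(x-1)) * Real.sqrt (-(x+1)) = Real.sqrt (x^2-1) := by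
    rw [← Real.sqrt_mul (by linarith)]
    congr 1
    ring
  have h2 : x * Real.sqrt (1 - x⁻¹^2) = -Real.sqrt (x^2-1) := by
    have hx2 : x^2 * (1 - x⁻¹^2) = x^2 - 1 := by field_simp
    rw [← hx2, Real.sqrt_mul (sq_nonneg x), Real.sqrt_sq_eq_abs, abs_of_neg (by linarith)]
    ring
  calc ((Real.sqrt (-(x-1)) : ℝ):ℂ) * Complex.I * (((Real.sqrt (-(x+1)) : ℝ):ℂ) * Complex.I)
      = -(((Real.sqrt (-(x-1)) * Real.sqrt (-(x+1)) : ℝ)):ℂ) := by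
        push_cast
        have : Complex.I * Complex.I = -1 := Complex.I_mul_I
        ring_nf
        rw [Complex.I_sq]
        ring
    _ = -(((Real.sqrt (x^2-1) : ℝ)):ℂ) := by rw [h1]
    _ = ((x * Real.sqrt (1 - x⁻¹^2) : ℝ):ℂ) := by rw [h2]; push_cast; ring
    _ = (x:ℂ) * ((Real.sqrt (1 - x⁻¹^2) : ℝ):ℂ) := by push_cast; ring

lemma sqrt_branch {z : ℂ} (hz : 1 < ‖z‖) :
    (z-1)^(1/2:ℂ) * (z+1)^(1/2:ℂ) = z * (1 - (z⁻¹)^2)^(1/2:ℂ) := by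
  by_cases hsp : z ∈ Complex.slitPlane
  · exact branch_eq_on_Uset z ⟨hz, hsp⟩
  · rw [Complex.mem_slitPlane_iff] at hsp
    push_neg at hsp
    obtain ⟨hre, him⟩ := hsp
    have hzre : z = ((z.re : ℝ):ℂ) := by
      apply Complex.ext <;> simp [him]
    have hlt : z.re < -1 := by
      have : |z.re| = ‖z‖ := by
        rw [hzre, Complex.norm_real, Real.norm_eq_abs]; simp
      rcases abs_cases z.re with ⟨h1, _⟩ | ⟨h1, _⟩
      · nlinarith [hz, this]
      · nlinarith [hz, this]
    rw [hzre]
    exact branch_neg_real hlt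

lemma circleIntegral_zpow {r : ℝ} (hr : 0 < r) (k : ℤ) :
    (∮ z in C(0, r), z ^ k) = if k = -1 then 2 * Real.pi * Complex.I else 0 := by
  split_ifs with h
  · subst h
    have := circleIntegral.integral_sub_inv_of_mem_ball
      (Metric.mem_ball_self hr (x := (0:ℂ)))
    simpa [zpow_neg_one] using this
  · simpa using circleIntegral.integral_sub_zpow_of_ne h 0 0 r

lemma hasSum_circleIntegral_aux {r : ℝ} (hr0 : 0 < r) (c : ℕ → ℝ) (hc : ∀ N, 0 ≤ c N)
    (hsum : Summable (fun N => c N * r ^ N)) {h : ℂ → ℂ}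
    (hh : ∀ w : ℂ, ‖w‖ = r → HasSum (fun N => (c N : ℂ) * w ^ N) (h w)) (p : ℤ) :
    HasSum (fun N => (c N : ℂ) * (∮ z in C(0, r), z ^ ((N:ℤ) + p)))
      (∮ z in C(0, r), z ^ p * h z) := by
  have hne : ∀ θ : ℝ, circleMap 0 r θ ≠ 0 := fun θ => circleMap_ne_center hr0.ne'
  have hnorm : ∀ θ : ℝ, ‖circleMap 0 r θ‖ = r := by
    intro θ
    rw [norm_circleMap_zero, abs_of_pos hr0]
  simp only [circleIntegral, deriv_circleMap, smul_eq_mul]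
  have key : HasSum
      (fun N => ∫ θ in (0:ℝ)..2*Real.pi,
        circleMap 0 r θ * Complex.I * ((c N : ℂ) * circleMap 0 r θ ^ ((N:ℤ) + p)))
      (∫ θ in (0:ℝ)..2*Real.pi,
        circleMap 0 r θ * Complex.I * (circleMap 0 r θ ^ p * h (circleMap 0 r θ))) := by
    apply intervalIntegral.hasSum_integral_of_dominated_convergence
      (bound := fun N θ => c N * r ^ N * (r ^ p * r))
    · intro N
      apply Continuous.aestronglyMeasurable
      apply ((continuous_circleMap 0 r).mul continuous_const).mul
      apply Continuous.mul continuous_const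
      exact Continuous.zpow₀ (continuous_circleMap 0 r) _ (fun θ => Or.inl (hne θ))
    · intro N
      filter_upwards with θ _
      rw [norm_mul, norm_mul, norm_mul, norm_zpow, hnorm θ]
      simp only [Complex.norm_I, mul_one, Complex.norm_real, Real.norm_eq_abs]
      rw [_root_.abs_of_nonneg (hc N), zpow_add₀ hr0.ne', zpow_natCast]
      exact le_of_eq (by ring)
    · filter_upwards with θ _
      exact hsum.mul_right _
    · exact intervalIntegrable_const
    · filter_upwards with θ _
      have hw := hh (circleMap 0 r θ) (hnorm θ)
      have := (hw.mul_right (circleMap 0 r θ ^ p)).mul_left (circleMap 0 r θ * Complex.I)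
      convert this using 2 with N
      · rfl
      · rw [zpow_add₀ (hne θ), zpow_natCast]
        ring
      · ring
  convert key using 2 with N
  rw [← intervalIntegral.integral_const_mul]
  congr 1
  funext θ
  ring

lemma circleIntegral_eq_zero_of_nonneg_pow {r : ℝ} (hr0 : 0 < r) (c : ℕ → ℝ)
    (hc : ∀ N, 0 ≤ c N) (hsum : Summable (fun N => c N * r ^ N)) {h : ℂ → ℂ}
    (hh : ∀ w : ℂ, ‖w‖ = r → HasSum (fun N => (c N : ℂ) * w ^ N) (h w))
    {p : ℤ} (hp : 0 ≤ p) :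
    (∮ z in C(0, r), z ^ p * h z) = 0 := by
  have key := hasSum_circleIntegral_aux hr0 c hc hsum hh p
  have : ∀ N : ℕ, (c N : ℂ) * (∮ z in C(0, r), z ^ ((N:ℤ) + p)) = 0 := by
    intro N
    rw [circleIntegral_zpow hr0]
    rw [if_neg (by omega)]
    ring
  rw [funext this] at key
  simpa using key.unique hasSum_zero

lemma circleIntegral_eq_coeff {r : ℝ} (hr0 : 0 < r) (c : ℕ → ℝ)
    (hc : ∀ N, 0 ≤ c N) (hsum : Summable (fun N => c N * r ^ N)) {h : ℂ → ℂ}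
    (hh : ∀ w : ℂ, ‖w‖ = r → HasSum (fun N => (c N : ℂ) * w ^ N) (h w)) (N₀ : ℕ) :
    (∮ z in C(0, r), z ^ (-(N₀:ℤ) - 1) * h z) = 2 * Real.pi * Complex.I * (c N₀ : ℂ) := by
  have key := hasSum_circleIntegral_aux hr0 c hc hsum hh (-(N₀:ℤ) - 1)
  have heq : (fun N : ℕ => (c N : ℂ) * (∮ z in C(0, r), z ^ ((N:ℤ) + (-(N₀:ℤ) - 1))))
      = fun N : ℕ => if N = N₀ then 2 * Real.pi * Complex.I * (c N₀ : ℂ) else 0 := by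
    funext N
    rw [circleIntegral_zpow hr0]
    by_cases h : N = N₀
    · subst h
      rw [if_pos (by omega), if_pos rfl]
      ring
    · rw [if_neg (show ¬((N:ℤ) + (-(N₀:ℤ) - 1) = -1) by omega), if_neg h, mul_zero]
  rw [heq] at key
  exact key.unique (hasSum_ite_eq N₀ _)


lemma core_identity (m n : ℕ) {ζ : ℂ} (hζ : 1 < ‖ζ‖) :
    ζ⁻¹ * ((ζ⁻¹) ^ ((n:ℤ) - 2*m) * (((1 - (ζ⁻¹)^2)^(1/2:ℂ)) * (1 - ζ⁻¹)^(n+1))⁻¹)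
      = ζ * (ζ ^ (2*m) / ((ζ-1)^(1/2:ℂ) * (ζ+1)^(1/2:ℂ) * (ζ-1)^(n+1))) := by
  obtain ⟨hζ0, hζ1, hζ2⟩ := norm_one_lt_facts hζ
  rw [sqrt_branch hζ]
  set s : ℂ := (1 - (ζ⁻¹)^2)^(1/2:ℂ) with hs_def
  have hs : s ≠ 0 := cpow_half_ne_zero (one_sub_inv_sq_ne hζ)
  have hinv1 : 1 - ζ⁻¹ = (ζ - 1) * ζ⁻¹ := by
    field_simp
  rw [hinv1]
  have hzp : (ζ⁻¹) ^ ((n:ℤ) - 2*m) = (ζ ^ (2*m) : ℂ) * (ζ ^ n)⁻¹ := by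
    rw [inv_zpow, ← zpow_neg, neg_sub, zpow_sub₀ hζ0]
    rw [div_eq_mul_inv]
    norm_cast
  rw [hzp, mul_pow]
  have hpow : (ζ⁻¹ : ℂ) ^ (n+1) = (ζ ^ (n+1))⁻¹ := by rw [inv_pow]
  rw [hpow]
  have h1 : (ζ:ℂ)⁻¹ * (ζ^n)⁻¹ * ζ^(n+1) = 1 := by
    rw [pow_succ]; field_simp
  calc ζ⁻¹ * (ζ^(2*m) * (ζ^n)⁻¹ * (s * ((ζ-1)^(n+1) * (ζ^(n+1))⁻¹))⁻¹)
      = (ζ^(2*m) * s⁻¹ * ((ζ-1)^(n+1))⁻¹) * (ζ⁻¹ * (ζ^n)⁻¹ * ζ^(n+1)) := by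
        rw [mul_inv, mul_inv, inv_inv]; ring
    _ = ζ^(2*m) * s⁻¹ * ((ζ-1)^(n+1))⁻¹ := by rw [h1, mul_one]
    _ = ζ * (ζ^(2*m) / (ζ * s * (ζ-1)^(n+1))) := by
        rw [div_eq_mul_inv, mul_inv, mul_inv]
        calc ζ^(2*m) * s⁻¹ * ((ζ-1)^(n+1))⁻¹
            = (ζ * ζ⁻¹) * (ζ^(2*m) * s⁻¹ * ((ζ-1)^(n+1))⁻¹) := by
              rw [mul_inv_cancel₀ hζ0, one_mul]
          _ = ζ * (ζ^(2*m) * (ζ⁻¹ * s⁻¹ * ((ζ-1)^(n+1))⁻¹)) := by ring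

lemma circleMap_reflect (r : ℝ) (θ : ℝ) :
    circleMap 0 r (2*Real.pi - θ) = circleMap 0 r (-θ) := by
  have := periodic_circleMap 0 r (-θ)
  rw [show 2*Real.pi - θ = -θ + 2*Real.pi by ring]
  exact this

lemma circleMap_inv (R : ℝ) (hR : R ≠ 0) (θ : ℝ) :
    circleMap 0 R⁻¹ (-θ) = (circleMap 0 R θ)⁻¹ := by
  simp only [circleMap, zero_add]
  rw [mul_inv, ← Complex.exp_neg]
  push_cast
  ring_nf

lemma transform (m n : ℕ) (R : ℝ) (hR : 1 < R) :
    (∮ ζ in C(0, R), ζ ^ (2*m) / ((ζ-1)^(1/2:ℂ) * (ζ+1)^(1/2:ℂ) * (ζ-1)^(n+1)))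
      = ∮ w in C(0, R⁻¹), w ^ ((n:ℤ) - 2*m) * (((1 - w^2)^(1/2:ℂ)) * (1-w)^(n+1))⁻¹ := by
  have hR0 : (0:ℝ) < R := lt_trans one_pos hR
  simp only [circleIntegral, deriv_circleMap, smul_eq_mul]
  set B : ℝ → ℂ := fun θ => circleMap 0 R⁻¹ θ * Complex.I *
    ((circleMap 0 R⁻¹ θ) ^ ((n:ℤ) - 2*m) *
      (((1 - (circleMap 0 R⁻¹ θ)^2)^(1/2:ℂ)) * (1 - circleMap 0 R⁻¹ θ)^(n+1))⁻¹) with hB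
  have refl : ∫ θ in (0:ℝ)..2*Real.pi, B (2*Real.pi - θ) = ∫ θ in (0:ℝ)..2*Real.pi, B θ := by
    simpa using intervalIntegral.integral_comp_sub_left B (2*Real.pi)
  rw [← refl]
  apply intervalIntegral.integral_congr
  intro θ _
  have hζnorm : ‖circleMap 0 R θ‖ = R := by
    rw [norm_circleMap_zero, abs_of_pos hR0]
  have hζ : 1 < ‖circleMap 0 R θ‖ := by rw [hζnorm]; exact hR
  have hw : circleMap 0 R⁻¹ (2*Real.pi - θ) = (circleMap 0 R θ)⁻¹ := by
    rw [circleMap_reflect, circleMap_inv R hR0.ne']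
  simp only [hB, hw]
  symm
  have := core_identity m n (ζ := circleMap 0 R θ) hζ
  calc (circleMap 0 R θ)⁻¹ * Complex.I *
      (((circleMap 0 R θ)⁻¹) ^ ((n:ℤ) - 2*m) *
        (((1 - ((circleMap 0 R θ)⁻¹)^2)^(1/2:ℂ)) * (1 - (circleMap 0 R θ)⁻¹)^(n+1))⁻¹)
      = Complex.I * ((circleMap 0 R θ)⁻¹ *
        (((circleMap 0 R θ)⁻¹) ^ ((n:ℤ) - 2*m) *
        (((1 - ((circleMap 0 R θ)⁻¹)^2)^(1/2:ℂ)) * (1 - (circleMap 0 R θ)⁻¹)^(n+1))⁻¹)) := by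
        ring
    _ = Complex.I * (circleMap 0 R θ * (circleMap 0 R θ ^ (2*m) /
          ((circleMap 0 R θ - 1)^(1/2:ℂ) * (circleMap 0 R θ + 1)^(1/2:ℂ) *
            (circleMap 0 R θ - 1)^(n+1)))) := by rw [this]
    _ = circleMap 0 R θ * Complex.I * (circleMap 0 R θ ^ (2*m) /
          ((circleMap 0 R θ - 1)^(1/2:ℂ) * (circleMap 0 R θ + 1)^(1/2:ℂ) *
            (circleMap 0 R θ - 1)^(n+1))) := by ring

noncomputable def eseq : ℕ → ℝ := fun k => if Even k then aseq (k/2) else 0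
noncomputable def bseq (n : ℕ) : ℕ → ℝ := fun k => ((k + n).choose n : ℝ)
noncomputable def cseq (n : ℕ) : ℕ → ℝ := fun N => ∑ i ∈ range (N+1), eseq i * bseq n (N - i)

lemma eseq_nonneg (k : ℕ) : 0 ≤ eseq k := by
  unfold eseq; split_ifs
  · exact (aseq_pos _).le
  · exact le_refl 0
lemma bseq_nonneg (n k : ℕ) : 0 ≤ bseq n k := Nat.cast_nonneg _
lemma cseq_nonneg (n N : ℕ) : 0 ≤ cseq n N := by
  apply Finset.sum_nonneg; intro i _; exact mul_nonneg (eseq_nonneg i) (bseq_nonneg n _)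

lemma hasSum_eseq {w : ℂ} (hw : ‖w‖ < 1) :
    HasSum (fun k => (eseq k : ℂ) * w ^ k) (((1 - w^2) ^ (1/2:ℂ))⁻¹) := by
  have hw2 : ‖w^2‖ < 1 := by
    rw [norm_pow]; exact pow_lt_one₀ (norm_nonneg w) hw (by norm_num)
  have h := hasSum_aseq hw2
  have hinj : Function.Injective (fun j : ℕ => 2*j) := fun a b hab => by dsimp at hab; omega
  have hvan : ∀ k ∉ Set.range (fun j : ℕ => 2*j), (eseq k : ℂ) * w ^ k = 0 := by
    intro k hk
    have : ¬ Even k := by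
      intro ⟨t, ht⟩
      exact hk ⟨t, by dsimp; omega⟩
    rw [eseq, if_neg this]
    simp
  rw [← Function.Injective.hasSum_iff hinj hvan]
  convert h using 1
  funext j
  simp only [Function.comp_apply]
  rw [eseq, if_pos (even_two_mul j), Nat.mul_div_cancel_left j (by norm_num), pow_mul]

lemma summable_norm_eseq {w : ℂ} (hw : ‖w‖ < 1) :
    Summable fun k => ‖(eseq k : ℂ) * w ^ k‖ := by
  have hw2 : ‖w^2‖ < 1 := by
    rw [norm_pow]; exact pow_lt_one₀ (norm_nonneg w) hw (by norm_num)
  have hinj : Function.Injective (fun j : ℕ => 2*j) := fun a b hab => by dsimp at hab; omega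
  have hvan : ∀ k ∉ Set.range (fun j : ℕ => 2*j), ‖(eseq k : ℂ) * w ^ k‖ = 0 := by
    intro k hk
    have : ¬ Even k := by
      intro ⟨t, ht⟩
      exact hk ⟨t, by dsimp; omega⟩
    rw [eseq, if_neg this]
    simp
  rw [← Function.Injective.summable_iff hinj hvan]
  have := summable_norm_aseq hw2
  convert this using 1
  funext j
  simp only [Function.comp_apply]
  rw [eseq, if_pos (even_two_mul j), Nat.mul_div_cancel_left j (by norm_num), pow_mul]

lemma hasSum_bseq (n : ℕ) {w : ℂ} (hw : ‖w‖ < 1) :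
    HasSum (fun k => (bseq n k : ℂ) * w ^ k) (((1 - w) ^ (n+1))⁻¹) := by
  have h := hasSum_choose_mul_geometric_of_norm_lt_one n hw
  rw [show ((1 - w) ^ (n+1))⁻¹ = 1 / (1 - w) ^ (n+1) from (one_div _).symm]
  have he : (fun k => (bseq n k : ℂ) * w ^ k)
      = (fun k : ℕ => ((k + n).choose n : ℂ) * w ^ k) := by
    funext k; rw [bseq]; push_cast; ring
  rw [he]
  exact h

lemma summable_norm_bseq (n : ℕ) {w : ℂ} (hw : ‖w‖ < 1) :
    Summable fun k => ‖(bseq n k : ℂ) * w ^ k‖ := by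
  have habs : (‖w‖ : ℝ) < 1 := hw
  have h : Summable (fun k : ℕ => ((k + n).choose n : ℝ) * ‖w‖ ^ k) := by
    have := (hasSum_choose_mul_geometric_of_norm_lt_one (𝕜 := ℝ) n
      (by rwa [Real.norm_eq_abs, _root_.abs_of_nonneg (norm_nonneg w)])).summable
    exact this
  convert h using 1
  funext k
  rw [norm_mul, norm_pow, Complex.norm_real, Real.norm_eq_abs, _root_.abs_of_nonneg (bseq_nonneg n k)]
  rw [bseq]

lemma hasSum_cseq (n : ℕ) {w : ℂ} (hw : ‖w‖ < 1) :
    HasSum (fun N => (cseq n N : ℂ) * w ^ N)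
      ((((1 - w^2) ^ (1/2:ℂ)) * (1 - w) ^ (n+1))⁻¹) := by
  have he := hasSum_eseq hw
  have hb := hasSum_bseq n hw
  have key := hasSum_sum_range_mul_of_summable_norm'
    (summable_norm_eseq hw) he.summable (summable_norm_bseq n hw) hb.summable
  rw [he.tsum_eq, hb.tsum_eq] at key
  rw [mul_inv]
  convert key using 1
  · rfl
  funext N
  rw [cseq]
  have : ∀ k ∈ range (N+1), ((eseq k : ℂ) * w ^ k) * ((bseq n (N-k) : ℂ) * w ^ (N-k))
      = ((eseq k * bseq n (N-k) : ℝ) : ℂ) * w ^ N := by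
    intro k hk
    simp only [Finset.mem_range] at hk
    have hxN : w ^ k * w ^ (N-k) = w ^ N := by rw [← pow_add]; congr 1; omega
    push_cast
    calc (eseq k : ℂ) * w ^ k * ((bseq n (N-k) : ℂ) * w ^ (N-k))
        = (eseq k : ℂ) * (bseq n (N-k) : ℂ) * (w ^ k * w ^ (N-k)) := by ring
      _ = (eseq k : ℂ) * (bseq n (N-k) : ℂ) * w ^ N := by rw [hxN]
  rw [Finset.sum_congr rfl this, ← Finset.sum_mul, ← Complex.ofReal_sum]

lemma summable_cseq_real (n : ℕ) {r : ℝ} (h0 : 0 ≤ r) (hr : r < 1) :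
    Summable fun N => cseq n N * r ^ N := by
  have hw : ‖(r:ℂ)‖ < 1 := by rwa [Complex.norm_real, Real.norm_eq_abs, _root_.abs_of_nonneg h0]
  have := (hasSum_cseq n hw).summable
  rw [← Complex.summable_ofReal]
  convert this using 1
  funext N
  push_cast
  ring

lemma sum_range_two_mul {M : Type*} [AddCommMonoid M] (K : ℕ) (f : ℕ → M) :
    ∑ i ∈ range (2*K), f i = ∑ j ∈ range K, (f (2*j) + f (2*j+1)) := by
  induction K with
  | zero => simp
  | succ K ih =>
    rw [show 2*(K+1) = (2*K + 1) + 1 by ring, Finset.sum_range_succ, Finset.sum_range_succ,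
      ih, Finset.sum_range_succ]
    rw [add_assoc]

lemma aseq_eq_pochC (j : ℕ) :
    ((aseq j : ℝ) : ℂ) = pochC (1/2) j / (j.factorial : ℂ) := by
  unfold pochC
  rw [← Finset.prod_range_add_one_eq_factorial j]
  push_cast
  rw [← Finset.prod_div_distrib]
  rw [aseq, Complex.ofReal_prod]
  apply Finset.prod_congr rfl
  intro i _
  push_cast
  rw [div_eq_div_iff]
  · ring
  · have h2 : ((2:ℂ)*i+2) = 2*((i:ℂ)+1) := by ring
    rw [h2]
    apply mul_ne_zero (by norm_num)
    exact Nat.cast_add_one_ne_zero i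
  · exact Nat.cast_add_one_ne_zero i

/-- for `m ≥ 1`, `n ≥ 0` and `R > 1`, the endpoint Taylor-coefficient integrals
for the exponential weight: if `n ≤ 2m-1` then
`(1/(2πi)) ∮_{|ζ|=R} ζ^{2m}/((ζ-1)^{1/2}(ζ+1)^{1/2}(ζ-1)^{n+1}) dζ
  = ∑_{j=0}^{⌊(2m-n-1)/2⌋} ((1/2)_j/j!) C(2m-1-2j, 2m-n-1-2j)`,
and if `n ≥ 2m` the integral equals `0`. -/
theorem circle_integral_exponential_weight_coeffs (m n : ℕ) (hm : 1 ≤ m)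
    (R : ℝ) (hR : 1 < R) :
    (n ≤ 2 * m - 1 →
      (1 / (2 * Real.pi * Complex.I)) *
          (∮ ζ in C(0, R), ζ ^ (2 * m) /
            ((ζ - 1) ^ (1 / 2 : ℂ) * (ζ + 1) ^ (1 / 2 : ℂ) * (ζ - 1) ^ (n + 1)))
        = ∑ j ∈ Finset.range ((2 * m - n - 1) / 2 + 1),
            pochC (1 / 2) j / (j.factorial : ℂ) *
              ((2 * m - 1 - 2 * j).choose (2 * m - n - 1 - 2 * j) : ℂ)) ∧
    (2 * m ≤ n →
      (∮ ζ in C(0, R), ζ ^ (2 * m) /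
          ((ζ - 1) ^ (1 / 2 : ℂ) * (ζ + 1) ^ (1 / 2 : ℂ) * (ζ - 1) ^ (n + 1))) = 0) := by
  have hR0 : (0:ℝ) < R := lt_trans one_pos hR
  have hrinv0 : (0:ℝ) < R⁻¹ := by positivity
  have hrinv1 : R⁻¹ < 1 := by
    rw [inv_lt_one_iff₀]; right; exact hR
  have hsum := summable_cseq_real n hrinv0.le hrinv1
  have hh : ∀ w : ℂ, ‖w‖ = R⁻¹ → HasSum (fun N => (cseq n N : ℂ) * w ^ N)
      ((((1 - w^2) ^ (1/2:ℂ)) * (1 - w) ^ (n+1))⁻¹) := by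
    intro w hw
    exact hasSum_cseq n (by rw [hw]; exact hrinv1)
  constructor
  · intro hn
    rw [transform m n R hR]
    have hp : (n:ℤ) - 2*m = -((2*m - n - 1 : ℕ):ℤ) - 1 := by omega
    simp only [hp]
    rw [circleIntegral_eq_coeff hrinv0 (cseq n) (cseq_nonneg n) hsum hh (2*m - n - 1)]
    have hdiv : (1 / (2 * (Real.pi:ℂ) * Complex.I)) *
        (2 * (Real.pi:ℂ) * Complex.I * ((cseq n (2*m-n-1) : ℝ):ℂ))
          = ((cseq n (2*m-n-1) : ℝ):ℂ) := by
      have hpi : ((Real.pi:ℂ)) ≠ 0 := by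
        exact_mod_cast Real.pi_ne_zero
      field_simp
    rw [hdiv]
    -- combinatorial identity
    have hfill : ∀ i ∈ Finset.range (2*((2*m-n-1)/2+1)), i ∉ Finset.range (2*m-n-1+1) →
        eseq i * bseq n ((2*m-n-1) - i) = 0 := by
      intro i hi hni
      simp only [Finset.mem_range] at hi hni
      have hmod : i % 2 = 1 := by omega
      rw [eseq]
      rw [if_neg (by rw [Nat.even_iff]; omega), zero_mul]
    have hstep : cseq n (2*m-n-1)
        = ∑ j ∈ Finset.range ((2*m-n-1)/2 + 1), aseq j * bseq n ((2*m-n-1) - 2*j) := by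
      rw [cseq]
      rw [Finset.sum_subset (Finset.range_subset_range.mpr
        (show 2*m-n-1+1 ≤ 2*((2*m-n-1)/2+1) by omega)) hfill]
      rw [sum_range_two_mul ((2*m-n-1)/2+1) (fun i => eseq i * bseq n ((2*m-n-1) - i))]
      apply Finset.sum_congr rfl
      intro j hj
      have h1 : eseq (2*j) = aseq j := by
        rw [eseq, if_pos (even_two_mul j), Nat.mul_div_cancel_left j (by norm_num)]
      have h2 : eseq (2*j+1) = 0 := by
        rw [eseq, if_neg (by intro ⟨t, ht⟩; omega)]
      rw [h1, h2, zero_mul, add_zero]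
    rw [hstep, Complex.ofReal_sum]
    apply Finset.sum_congr rfl
    intro j hj
    simp only [Finset.mem_range] at hj
    have hj2 : 2*j ≤ 2*m-n-1 := by omega
    have hB : ((2*m-n-1) - 2*j + n).choose n
        = (2*m-1-2*j).choose (2*m-n-1-2*j) := by
      rw [show (2*m-n-1) - 2*j + n = 2*m-1-2*j by omega]
      rw [show 2*m-n-1-2*j = (2*m-1-2*j) - n by omega]
      exact (Nat.choose_symm (by omega)).symm
    rw [Complex.ofReal_mul, aseq_eq_pochC, bseq, hB]
    norm_num
  · intro hn
    rw [transform m n R hR]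
    have hp : (0:ℤ) ≤ (n:ℤ) - 2*m := by omega
    exact circleIntegral_eq_zero_of_nonneg_pow hrinv0 (cseq n) (cseq_nonneg n) hsum hh hp
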